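/- Let K be an algebraically closed field of characteristic p > 3, let m be a positive integer not divisible by p, and let a, t ∈ K with a³ = −1 and t ≠ 0. Then the polynomial a² + t²X^mY^m − a·t·X^m is irreducible in K[X,Y]. -/

import Mathlib

open MvPolynomial

private noncomputable def statement15_e2 (K : Type) [Field K] :
    MvPolynomial (Fin 1) K ≃+* Polynomial K :=
  (MvPolynomial.finSuccEquiv K 0).toRingEquiv.trans
    (Polynomial.mapEquiv (MvPolynomial.isEmptyAlgEquiv K (Fin 0)).toRingEquiv)

private noncomputable def statement15_E (K : Type) [Field K] :
    MvPolynomial (Fin 2) K ≃+* Polynomial (Polynomial K) :=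
  (MvPolynomial.renameEquiv K (Equiv.swap (0 : Fin 2) 1)).toRingEquiv.trans
    ((MvPolynomial.finSuccEquiv K 1).toRingEquiv.trans
      (Polynomial.mapEquiv (statement15_e2 K)))

private lemma statement15_E_X0 (K : Type) [Field K] :
    statement15_E K (X 0) = Polynomial.C Polynomial.X := by
  simp only [statement15_E, Fin.isValue, AlgEquiv.toRingEquiv_eq_coe, Nat.reduceAdd,
    statement15_e2, RingEquiv.trans_apply, AlgEquiv.coe_ringEquiv, renameEquiv_apply, rename_X,
    Equiv.swap_apply_left, Polynomial.mapEquiv_apply, RingEquiv.coe_ringHom_trans,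
    AlgEquiv.toRingEquiv_toRingHom]
  rw [show (X (1 : Fin 2) : MvPolynomial (Fin 2) K) = X (Fin.succ 0) from rfl,
    MvPolynomial.finSuccEquiv_X_succ, Polynomial.map_C]
  simp [finSuccEquiv_X_zero]

private lemma statement15_E_X1 (K : Type) [Field K] :
    statement15_E K (X 1) = Polynomial.X := by
  simp only [statement15_E, Fin.isValue, AlgEquiv.toRingEquiv_eq_coe, Nat.reduceAdd,
    statement15_e2, RingEquiv.trans_apply, AlgEquiv.coe_ringEquiv, renameEquiv_apply, rename_X,
    Equiv.swap_apply_right, finSuccEquiv_X_zero, Polynomial.mapEquiv_apply,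
    RingEquiv.coe_ringHom_trans, AlgEquiv.toRingEquiv_toRingHom, Polynomial.map_X]

private lemma statement15_E_C (K : Type) [Field K] (k : K) :
    statement15_E K (C k) = Polynomial.C (Polynomial.C k) := by
  simp only [statement15_E, Fin.isValue, AlgEquiv.toRingEquiv_eq_coe, Nat.reduceAdd,
    statement15_e2, RingEquiv.trans_apply, AlgEquiv.coe_ringEquiv, renameEquiv_apply, algHom_C,
    algebraMap_eq, finSuccEquiv_apply, eval₂Hom_C, RingHom.coe_comp, Function.comp_apply,
    Polynomial.mapEquiv_apply, RingEquiv.coe_ringHom_trans, AlgEquiv.toRingEquiv_toRingHom,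
    Polynomial.map_C, RingHom.coe_coe, isEmptyAlgEquiv_apply, Algebra.algebraMap_self,
    RingHom.id_apply]
  exact congrArg (fun x => Polynomial.C (Polynomial.C x)) (MvPolynomial.coeff_zero_C k)

private lemma aux_eisen_s15 (K : Type) [Field K] [IsAlgClosed K]
    (p : ℕ) [CharP K p] (hp : p.Prime) (hp3 : 3 < p)
    (m : ℕ) (hm : 0 < m) (hpm : ¬ (p ∣ m))
    (a t : K) (ha : a ^ 3 = -1) (ht : t ≠ 0) :
    Irreducible (Polynomial.C (Polynomial.C t ^ 2 * Polynomial.X ^ m) * Polynomial.X ^ m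
      + Polynomial.C (Polynomial.C (a ^ 2) - Polynomial.C (a * t) * Polynomial.X ^ m) :
      Polynomial (Polynomial K)) := by
  have ha0 : a ≠ 0 := by
    rintro rfl; simp at ha
  have hmK : (m : K) ≠ 0 := fun h => hpm ((CharP.cast_eq_zero_iff K p m).mp h)
  obtain ⟨r, hr⟩ := IsAlgClosed.exists_pow_nat_eq (a / t) hm
  have htr : t * r ^ m = a := by rw [hr]; field_simp
  have hr0 : r ≠ 0 := by
    rintro rfl; rw [zero_pow hm.ne'] at hr
    exact ha0 (by rw [eq_comm, div_eq_zero_iff] at hr; exact hr.resolve_right ht)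
  set c1 : Polynomial K := Polynomial.C t ^ 2 * Polynomial.X ^ m with hc1def
  set c0 : Polynomial K := Polynomial.C (a ^ 2) - Polynomial.C (a * t) * Polynomial.X ^ m
    with hc0def
  have hc1 : c1 ≠ 0 := by
    simp [hc1def, pow_eq_zero_iff, ht]
  set g : Polynomial (Polynomial K) := Polynomial.C c1 * Polynomial.X ^ m + Polynomial.C c0
    with hgdef
  have hdm : (Polynomial.C c1 * Polynomial.X ^ m).natDegree = m :=
    Polynomial.natDegree_C_mul_X_pow m c1 hc1
  have hdeg : g.natDegree = m := by
    rw [hgdef, Polynomial.natDegree_add_C, hdm]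
  have hcoeff0 : g.coeff 0 = c0 := by
    simp [hgdef, Polynomial.coeff_X_pow, hm.ne, hm.ne']
  have hcoeffm : g.coeff m = c1 := by
    simp [hgdef, Polynomial.coeff_X_pow, Polynomial.coeff_C, hm.ne']
  have hlead : g.leadingCoeff = c1 := by
    rw [Polynomial.leadingCoeff, hdeg, hcoeffm]
  set π : Polynomial K := Polynomial.X - Polynomial.C r with hπdef
  have hπ0 : π ≠ 0 := Polynomial.X_sub_C_ne_zero r
  set 𝓟 : Ideal (Polynomial K) := Ideal.span {π} with h𝓟def
  have hprime : 𝓟.IsPrime :=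
    (Ideal.span_singleton_prime hπ0).mpr (Polynomial.prime_X_sub_C r)
  have hc0root : Polynomial.eval r c0 = 0 := by
    simp [hc0def, hr]; field_simp [hr]; ring
  have hf : g.IsEisensteinAt 𝓟 := by
    constructor
    · rw [hlead, h𝓟def, Ideal.mem_span_singleton, hπdef, Polynomial.dvd_iff_isRoot]
      simp only [Polynomial.IsRoot, hc1def, Polynomial.eval_mul, Polynomial.eval_pow,
        Polynomial.eval_C, Polynomial.eval_X]
      intro h
      apply ha0
      have : t * (t * r ^ m) = 0 := by rw [← h]; ring
      rw [htr] at this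
      rcases mul_eq_zero.mp this with h' | h'
      · exact absurd h' ht
      · exact h'
    · intro n hn
      rw [hdeg] at hn
      rcases Nat.eq_zero_or_pos n with rfl | hn0
      · rw [hcoeff0, h𝓟def, Ideal.mem_span_singleton, hπdef, Polynomial.dvd_iff_isRoot]
        exact hc0root
      · have : g.coeff n = 0 := by
          simp [hgdef, Polynomial.coeff_X_pow, hn.ne, Polynomial.coeff_C, hn0.ne']
        rw [this]; exact Ideal.zero_mem _
    · rw [hcoeff0, h𝓟def, Ideal.span_singleton_pow, Ideal.mem_span_singleton]
      intro hdvd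
      obtain ⟨q, hq⟩ := hdvd
      have hder : Polynomial.eval r (Polynomial.derivative c0) = 0 := by
        rw [hq]
        simp [Polynomial.derivative_mul, Polynomial.derivative_pow, hπdef]
      have hval : Polynomial.eval r (Polynomial.derivative c0)
          = -(a * t * ((m : K) * r ^ (m - 1))) := by
        rw [hc0def]
        simp [Polynomial.derivative_X_pow, Polynomial.derivative_pow]
      rw [hval, neg_eq_zero] at hder
      exact mul_ne_zero (mul_ne_zero ha0 ht)
        (mul_ne_zero hmK (pow_ne_zero _ hr0)) hder
  have hprim : g.IsPrimitive := by
    intro c hc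
    rw [Polynomial.C_dvd_iff_dvd_coeff] at hc
    have h0 : c ∣ c0 := hcoeff0 ▸ hc 0
    have h1 : c ∣ c1 := hcoeffm ▸ hc m
    have : c ∣ Polynomial.C (t ^ 2 * a ^ 2) := by
      have : Polynomial.C (t ^ 2 * a ^ 2) =
          Polynomial.C (t ^ 2) * c0 + Polynomial.C (a * t) * c1 := by
        rw [hc0def, hc1def]
        simp only [Polynomial.C_mul, Polynomial.C_pow]
        ring
      rw [this]
      exact dvd_add (Dvd.dvd.mul_left h0 _) (Dvd.dvd.mul_left h1 _)
    exact isUnit_of_dvd_unit this (Polynomial.isUnit_C.mpr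
      (isUnit_iff_ne_zero.mpr (mul_ne_zero (pow_ne_zero _ ht) (pow_ne_zero _ ha0))))
  exact hf.irreducible hprime hprim (by rw [hdeg]; exact hm)

theorem statement_15 (K : Type) [Field K] [IsAlgClosed K]
    (p : ℕ) [CharP K p] (hp : p.Prime) (hp3 : 3 < p)
    (m : ℕ) (hm : 0 < m) (hpm : ¬ (p ∣ m))
    (a t : K) (ha : a ^ 3 = -1) (ht : t ≠ 0) :
    Irreducible (C a ^ 2 + C t ^ 2 * X 0 ^ m * X 1 ^ m - C a * C t * X 0 ^ m :
        MvPolynomial (Fin 2) K) := by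
  rw [← MulEquiv.irreducible_iff (statement15_E K)]
  have heq : statement15_E K (C a ^ 2 + C t ^ 2 * X 0 ^ m * X 1 ^ m - C a * C t * X 0 ^ m)
      = Polynomial.C (Polynomial.C t ^ 2 * Polynomial.X ^ m) * Polynomial.X ^ m
        + Polynomial.C (Polynomial.C (a ^ 2) - Polynomial.C (a * t) * Polynomial.X ^ m) := by
    simp only [map_sub, map_add, map_pow, map_mul,
      statement15_E_X0, statement15_E_X1, statement15_E_C]
    ring
  rw [heq]
  exact aux_eisen_s15 K p hp hp3 m hm hpm a t ha ht
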